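/- Let p, q be primes with p < q, p > 3, p | σ(q²) and q | σ(p²). Then p ≡ 1 (mod 3) and q ≡ 1 (mod 3). -/
import Mathlib

lemma aux_mod_three (r m : ℕ) (hr : r.Prime) (hr3 : r ≠ 3)
    (h : r ∣ 1 + m + m ^ 2) : r % 3 = 1 := by
  haveI : Fact r.Prime := ⟨hr⟩
  set x : ZMod r := (m : ZMod r) with hx
  have h0 : 1 + x + x ^ 2 = 0 := by
    have : ((1 + m + m ^ 2 : ℕ) : ZMod r) = 0 := (ZMod.natCast_eq_zero_iff _ _).2 h
    push_cast at this
    linear_combination this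
  have hx3 : x ^ 3 = 1 := by linear_combination (x - 1) * h0
  have hxne1 : x ≠ 1 := by
    intro h1
    rw [h1] at h0
    have h3 : ((3 : ℕ) : ZMod r) = 0 := by push_cast; linear_combination h0
    have := (ZMod.natCast_eq_zero_iff 3 r).1 h3
    have := (Nat.prime_dvd_prime_iff_eq hr Nat.prime_three).1 this
    exact hr3 this
  have hxne0 : x ≠ 0 := by
    intro h0'
    rw [h0'] at hx3
    simp at hx3
  have hord : orderOf x = 3 := by
    have hdvd : orderOf x ∣ 3 := orderOf_dvd_of_pow_eq_one hx3
    rcases (Nat.prime_three.eq_one_or_self_of_dvd _ hdvd) with h1 | h3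
    · exact absurd (orderOf_eq_one_iff.1 h1) hxne1
    · exact h3
  have hcard : x ^ (r - 1) = 1 := ZMod.pow_card_sub_one_eq_one hxne0
  have h3dvd : (3 : ℕ) ∣ r - 1 := by
    rw [← hord]
    exact orderOf_dvd_of_pow_eq_one hcard
  have := hr.two_le
  omega

theorem mutual_dvd_mod_three (p q : ℕ) (hp : p.Prime) (hq : q.Prime)
    (h3p : 3 < p) (hpq : p < q)
    (hpdvd : p ∣ 1 + q + q ^ 2) (hqdvd : q ∣ 1 + p + p ^ 2) :
    p % 3 = 1 ∧ q % 3 = 1 := by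
  exact ⟨aux_mod_three p q hp (by omega) hpdvd,
         aux_mod_three q p hq (by omega) hqdvd⟩
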